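/- Let q ∈ [0,1) and μ, ν ∈ ℝ with 0 ≤ μ < 1 and ν ≤ μ. Then the series ∑_{j=0}^{∞} φ_{q,μ,ν}(j|∞) converges absolutely and equals 1. -/

import Mathlib

open scoped BigOperators

noncomputable section

/-- q-Pochhammer symbol `(a;q)_k` for integer `k`, with the convention
`(a;q)_k = 1/((a/q;1/q)_{-k})` for `k ≤ -1`. -/
def qPoch (a q : ℝ) (k : ℤ) : ℝ :=
  if 0 ≤ k then ∏ i ∈ Finset.range k.toNat, (1 - a * q ^ i)
  else 1 / ∏ i ∈ Finset.range (-k).toNat, (1 - (a / q) * (1 / q) ^ i)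

/-- Infinite q-Pochhammer symbol `(a;q)_∞`. -/
def qPochInf (a q : ℝ) : ℝ := ∏' i : ℕ, (1 - a * q ^ i)

/-- q-beta-binomial weight `φ_{q,μ,ν}(j|m)` (equal to `0` for `j > m`). -/
def phiBB (q μ ν : ℝ) (j m : ℕ) : ℝ :=
  if j ≤ m then
    (∏ i ∈ Finset.range j, (μ - ν * q ^ i)) * qPoch μ q ((m : ℤ) - (j : ℤ)) * qPoch q q (m : ℤ)
      / (qPoch ν q (m : ℤ) * qPoch q q (j : ℤ) * qPoch q q ((m : ℤ) - (j : ℤ)))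
  else 0

/-- q-beta-binomial weight `φ_{q,μ,ν}(j|∞)`. -/
def phiBBInf (q μ ν : ℝ) (j : ℕ) : ℝ :=
  (∏ i ∈ Finset.range j, (μ - ν * q ^ i)) * qPochInf μ q
    / (qPoch q q (j : ℤ) * qPochInf ν q)

/-- Regularized terminating basic hypergeometric sum
`{}_{r+1}φ̄_r(q^{-n}; a_1,…,a_r; b_1,…,b_r | q, z)`. -/
def qHypReg (q z : ℝ) (n : ℕ) (a b : List ℝ) : ℝ :=
  ∑ k ∈ Finset.range (n + 1),
    z ^ k * (qPoch (q ^ (-(n : ℤ))) q (k : ℤ) / qPoch q q (k : ℤ))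
      * ((a.map fun x => qPoch x q (k : ℤ)).prod)
      * ((b.map fun x => qPoch (x * q ^ k) q ((n : ℤ) - (k : ℤ))).prod)

/-- Stochastic higher spin six vertex weight `L^{(J)}_{u,s}(i₁,j₁;i₂,j₂)`. -/
def Lw (q u s : ℝ) (J : ℕ) (i1 j1 i2 j2 : ℕ) : ℝ :=
  (if i1 + j1 = i2 + j2 then (1 : ℝ) else 0) *
    ((-1 : ℝ) ^ i1 * q ^ (((i1 : ℤ) * ((i1 : ℤ) + 2 * (j1 : ℤ) - 1)) / 2) * u ^ i1
      * s ^ ((j1 : ℤ) + (j2 : ℤ) - (i2 : ℤ)) * qPoch (u / s) q ((j2 : ℤ) - (i1 : ℤ)))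
    / (qPoch q q (i2 : ℤ) * qPoch (s * u) q ((i2 : ℤ) + (j2 : ℤ))
        * qPoch (q ^ ((J : ℤ) + 1 - (j1 : ℤ))) q ((j1 : ℤ) - (j2 : ℤ)))
    * qHypReg q q i2
        [q ^ (-(i1 : ℤ)), s * u * q ^ J, q * s / u]
        [s ^ 2, q ^ (1 + (j2 : ℤ) - (i1 : ℤ)), q ^ ((J : ℤ) + 1 - (i2 : ℤ) - (j2 : ℤ))]

/-- Cross vertex weight `R_{z,s₁,s₂}(i₁,i₂;j₁,j₂)`. -/
def Rw (q z s1 s2 : ℝ) (i1 i2 j1 j2 : ℕ) : ℝ :=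
  (if j1 + i2 = i1 + j2 then (1 : ℝ) else 0) *
    ((-(s1 * z)) ^ j1 * q ^ (((j1 : ℤ) * ((j1 : ℤ) + 2 * (i2 : ℤ) - 1)) / 2)
      * s2 ^ ((i2 : ℤ) + (j2 : ℤ) - (i1 : ℤ)) * qPoch (z * s1 / s2) q ((j2 : ℤ) - (j1 : ℤ)))
    / (qPoch q q (i1 : ℤ) * qPoch (z * s1 * s2) q ((i1 : ℤ) + (j2 : ℤ))
        * qPoch (s1 ^ (-2 : ℤ) * q ^ (1 - (i2 : ℤ))) q ((i2 : ℤ) - (j2 : ℤ)))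
    * qHypReg q q i1
        [q ^ (-(j1 : ℤ)), z * s2 / s1, q * s2 / (z * s1)]
        [s2 ^ 2, q ^ (1 + (j2 : ℤ) - (j1 : ℤ)), s1 ^ (-2 : ℤ) * q ^ (1 - (i1 : ℤ) - (j2 : ℤ))]

/-- Boundary cross vertex weight `R^{bdry}_{z,s₁,s₂}(j₁,j₂)`. -/
def Rbdry (q z s1 s2 : ℝ) (j1 j2 : ℕ) : ℝ :=
  ((-1 : ℝ) ^ j1 * q ^ (j1 * (j1 - 1) / 2) * s2 ^ (2 * j2)
      * qPoch (s1 * z / s2) q ((j2 : ℤ) - (j1 : ℤ)))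
    / (qPoch q q (j2 : ℤ) * qPoch (s2 ^ 2) q (j1 : ℤ))
    * (qPochInf (s2 ^ 2) q / qPochInf (z * s1 * s2) q)
    * qHypReg q q j1
        [z * s2 / s1, q ^ ((j2 : ℤ) - (j1 : ℤ)) * z * s1 / s2]
        [q ^ ((j2 : ℤ) - (j1 : ℤ) + 1), q ^ (1 - (j1 : ℤ)) * z / (s1 * s2)]

/-- Auxiliary `q = 0` cross vertex weight `R̂^{(0)}_{z,s₁,s₂}(i₁,i₂;j₁,j₂)`. -/
def Rhat0 (z s1 s2 : ℝ) (i1 i2 j1 j2 : ℕ) : ℝ :=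
  (if i1 + j2 = i2 + j1 then (1 : ℝ) else 0) *
    (z ^ j1 * (s1 * s2) ^ (-(j1 : ℤ)) * s2 ^ (2 * j2)) *
    ( ((1 - z * s1 / s2 * (if j1 < j2 then (1 : ℝ) else 0))
        * (1 - s2 ^ 2 * (if 0 < i1 then (1 : ℝ) else 0))
        * (1 - s1 ^ 2 * (if i2 = 0 then (1 : ℝ) else 0) * (if 0 < j1 then (1 : ℝ) else 0)))
      / (1 - z * s1 * s2 * (if 0 < i1 + j2 then (1 : ℝ) else 0))
      - (if i1 = i2 ∧ 0 < i1 then (1 : ℝ) else 0) * (if 0 < j1 then (1 : ℝ) else 0)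
          * ((-s1) * (s2 * z - s1) / (1 - z * s1 * s2)) )

/-- The `q = 0` cross vertex weight `R^{(0)}_{z,s₁,s₂}(i₁,i₂;j₁,j₂)`. -/
def R0 (z s1 s2 : ℝ) (i1 i2 j1 j2 : ℕ) : ℝ :=
  if j1 ≤ j2 then Rhat0 z s1 s2 i1 i2 j1 j2
  else z ^ ((j2 : ℤ) - (i2 : ℤ)) * s2 ^ (i2 + j2) * s1 ^ (-(i1 : ℤ) - (j1 : ℤ))
        * Rhat0 z s2 s1 j2 j1 i2 i1

/-- Auxiliary `q = 0` boundary cross vertex weight `R̂^{bdry,(0)}_{z,s₁,s₂}(j₁,j₂)`. -/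
def RbdryHat0 (z s1 s2 : ℝ) (j1 j2 : ℕ) : ℝ :=
  (z ^ j1 * (s1 * s2) ^ (-(j1 : ℤ)) * s2 ^ (2 * j2) / (1 - z * s1 * s2)) *
    ((1 - z * s1 / s2 * (if j1 < j2 then (1 : ℝ) else 0)) * (1 - s2 ^ 2)
      + (z * s1 * s2 - s1 ^ 2) * (if j1 = j2 ∧ 0 < j1 then (1 : ℝ) else 0))

/-- The `q = 0` boundary cross vertex weight `R^{bdry,(0)}_{z,s₁,s₂}(j₁,j₂)`. -/
def Rbdry0 (z s1 s2 : ℝ) (j1 j2 : ℕ) : ℝ :=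
  if j1 ≤ j2 then RbdryHat0 z s1 s2 j1 j2
  else (s2 ^ (2 * j2) * s1 ^ (-(2 * (j1 : ℤ)))
        / (1 - s1 ^ 2 * (if j2 = 0 then (1 : ℝ) else 0))) * RbdryHat0 z s2 s1 j2 j1

/-- Terminating basic hypergeometric series `{}_4φ_3`. -/
def qHyp4phi3 (q z : ℝ) (n : ℕ) (a1 a2 a3 b1 b2 b3 : ℝ) : ℝ :=
  ∑ k ∈ Finset.range (n + 1),
    (qPoch (q ^ (-(n : ℤ))) q (k : ℤ) * qPoch a1 q (k : ℤ) * qPoch a2 q (k : ℤ)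
        * qPoch a3 q (k : ℤ))
      / (qPoch q q (k : ℤ) * qPoch b1 q (k : ℤ) * qPoch b2 q (k : ℤ) * qPoch b3 q (k : ℤ))
      * z ^ k


open Filter Finset in
lemma prod_one_sub_ge' (s : Finset ℕ) (x : ℕ → ℝ) (h0 : ∀ i ∈ s, 0 ≤ x i)
    (h1 : ∀ i ∈ s, x i ≤ 1) : 1 - ∑ i ∈ s, x i ≤ ∏ i ∈ s, (1 - x i) := by
  induction s using Finset.cons_induction with
  | empty => simp
  | cons a s ha ih =>
    rw [Finset.prod_cons, Finset.sum_cons]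
    have h0a := h0 a (Finset.mem_cons_self a s)
    have h1a := h1 a (Finset.mem_cons_self a s)
    have ihs := ih (fun i hi => h0 i (Finset.mem_cons_of_mem hi))
      (fun i hi => h1 i (Finset.mem_cons_of_mem hi))
    have hsum : 0 ≤ ∑ i ∈ s, x i :=
      Finset.sum_nonneg (fun i hi => h0 i (Finset.mem_cons_of_mem hi))
    nlinarith [mul_le_mul_of_nonneg_left ihs (by linarith : (0:ℝ) ≤ 1 - x a)]

open Filter Finset in
lemma qPochInf_spec' (a q : ℝ) (hq0 : 0 ≤ q) (hq1 : q < 1) (ha : a < 1) :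
    0 < qPochInf a q ∧
      Filter.Tendsto (fun n => ∏ i ∈ Finset.range n, (1 - a * q ^ i)) Filter.atTop
        (nhds (qPochInf a q)) := by
  have hqi : ∀ i : ℕ, q ^ i ≤ 1 := fun i => pow_le_one₀ hq0 hq1.le
  have hqip : ∀ i : ℕ, 0 ≤ q ^ i := fun i => pow_nonneg hq0 i
  set f : ℕ → ℝ := fun i => 1 - a * q ^ i with hf
  have key : ∃ L, 0 < L ∧ HasProd f L := by
    rcases le_or_gt a 0 with hA | hA
    · -- a ≤ 0 : increasing products, bounded above
      have hge1 : ∀ i, (1:ℝ) ≤ f i := fun i => by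
        have : a * q ^ i ≤ 0 := mul_nonpos_of_nonpos_of_nonneg hA (hqip i)
        simp only [hf]; linarith
      have hmono : Monotone fun s : Finset ℕ => ∏ i ∈ s, f i := by
        intro s t hst
        show ∏ i ∈ s, f i ≤ ∏ i ∈ t, f i
        rw [← Finset.prod_sdiff hst]
        have h1 : (1:ℝ) ≤ ∏ i ∈ t \ s, f i := by
          calc (1:ℝ) = ∏ _i ∈ t \ s, (1:ℝ) := by simp
            _ ≤ ∏ i ∈ t \ s, f i :=
              Finset.prod_le_prod (by norm_num) (fun i _ => hge1 i)
        have h2 : 0 ≤ ∏ i ∈ s, f i :=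
          Finset.prod_nonneg fun i _ => le_trans zero_le_one (hge1 i)
        nlinarith
      have hsumm : Summable fun i : ℕ => -a * q ^ i :=
        (summable_geometric_of_lt_one hq0 hq1).mul_left _
      have hbdd : BddAbove (Set.range fun s : Finset ℕ => ∏ i ∈ s, f i) := by
        refine ⟨Real.exp (∑' i : ℕ, -a * q ^ i), ?_⟩
        rintro y ⟨s, rfl⟩
        calc ∏ i ∈ s, f i ≤ ∏ i ∈ s, Real.exp (-a * q ^ i) := by
              refine Finset.prod_le_prod (fun i _ => by linarith [hge1 i]) (fun i _ => ?_)
              have := Real.add_one_le_exp (-a * q ^ i)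
              simp only [hf]; linarith
          _ = Real.exp (∑ i ∈ s, -a * q ^ i) := (Real.exp_sum s _).symm
          _ ≤ Real.exp (∑' i : ℕ, -a * q ^ i) := by
              refine Real.exp_le_exp.2 (Summable.sum_le_tsum s (fun i _ => ?_) hsumm)
              exact mul_nonneg (by linarith) (hqip i)
      have hT := tendsto_atTop_ciSup hmono hbdd
      refine ⟨_, ?_, hT⟩
      have h1le := le_ciSup hbdd (∅ : Finset ℕ)
      simp only [Finset.prod_empty] at h1le
      linarith
    · -- 0 < a < 1 : decreasing products, bounded below by a positive constant
      have hfpos : ∀ i, 0 < f i := fun i => by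
        have : a * q ^ i ≤ a * 1 := mul_le_mul_of_nonneg_left (hqi i) hA.le
        simp only [hf]; nlinarith
      have hfle1 : ∀ i, f i ≤ 1 := fun i => by
        have : 0 ≤ a * q ^ i := mul_nonneg hA.le (hqip i)
        simp only [hf]; linarith
      have hanti : Antitone fun s : Finset ℕ => ∏ i ∈ s, f i := by
        intro s t hst
        show ∏ i ∈ t, f i ≤ ∏ i ∈ s, f i
        rw [← Finset.prod_sdiff hst]
        have h1 : ∏ i ∈ t \ s, f i ≤ 1 :=
          Finset.prod_le_one (fun i _ => (hfpos i).le) (fun i _ => hfle1 i)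
        have h2 : 0 ≤ ∏ i ∈ s, f i := Finset.prod_nonneg (fun i _ => (hfpos i).le)
        nlinarith
      have hbdd : BddBelow (Set.range fun s : Finset ℕ => ∏ i ∈ s, f i) :=
        ⟨0, by rintro y ⟨s, rfl⟩; exact Finset.prod_nonneg fun i _ => (hfpos i).le⟩
      obtain ⟨N, hN⟩ : ∃ N : ℕ, a * q ^ N * (1 - q)⁻¹ ≤ 1 / 2 := by
        have h0 : Tendsto (fun n : ℕ => a * q ^ n * (1 - q)⁻¹) atTop
            (nhds (a * 0 * (1 - q)⁻¹)) :=
          ((tendsto_pow_atTop_nhds_zero_of_lt_one hq0 hq1).const_mul a).mul_const _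
        rw [mul_zero, zero_mul] at h0
        exact (h0.eventually_le_const (by norm_num : (0:ℝ) < 1/2)).exists
      set h : ℕ → ℝ := fun i => if N ≤ i then a * q ^ i else 0 with hh
      have hhnonneg : ∀ i, 0 ≤ h i := fun i => by
        simp only [hh]
        split
        · exact mul_nonneg hA.le (hqip i)
        · exact le_refl _
      have hhsumm : Summable h := by
        refine Summable.of_nonneg_of_le hhnonneg (fun i => ?_)
          ((summable_geometric_of_lt_one hq0 hq1).mul_left a)
        simp only [hh]
        split
        · exact le_refl _
        · exact mul_nonneg hA.le (hqip i)
      have htsum : ∑' i, h i ≤ 1 / 2 := by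
        have hsplit := Summable.sum_add_tsum_nat_add (f := h) N hhsumm
        have h1 : ∑ i ∈ Finset.range N, h i = 0 :=
          Finset.sum_eq_zero fun i hi => by
            simp only [hh, if_neg (not_le.2 (Finset.mem_range.1 hi))]
        have h2 : (fun i : ℕ => h (i + N)) = fun i : ℕ => (a * q ^ N) * q ^ i := by
          funext i
          simp only [hh, if_pos (Nat.le_add_left N i), pow_add]
          ring
        rw [h1, zero_add, h2] at hsplit
        rw [← hsplit, tsum_mul_left, tsum_geometric_of_lt_one hq0 hq1]
        exact hN
      have claim : ∀ s : Finset ℕ, (∏ i ∈ Finset.range N, f i) * (1/2) ≤ ∏ i ∈ s, f i := by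
        intro s
        classical
        rw [← Finset.prod_inter_mul_prod_diff s (Finset.range N) f]
        have hX : ∏ i ∈ Finset.range N, f i ≤ ∏ i ∈ s ∩ Finset.range N, f i := by
          rw [← Finset.prod_sdiff (Finset.inter_subset_right : s ∩ Finset.range N ⊆ Finset.range N)]
          have h1 : ∏ i ∈ Finset.range N \ (s ∩ Finset.range N), f i ≤ 1 :=
            Finset.prod_le_one (fun i _ => (hfpos i).le) (fun i _ => hfle1 i)
          have h2 : 0 ≤ ∏ i ∈ s ∩ Finset.range N, f i :=
            Finset.prod_nonneg fun i _ => (hfpos i).le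
          nlinarith
        have hY : (1:ℝ)/2 ≤ ∏ i ∈ s \ Finset.range N, f i := by
          have hb : ∑ i ∈ s \ Finset.range N, (a * q ^ i) ≤ 1/2 := by
            have he : ∑ i ∈ s \ Finset.range N, (a * q ^ i) = ∑ i ∈ s \ Finset.range N, h i := by
              refine Finset.sum_congr rfl fun i hi => ?_
              have : N ≤ i := le_of_not_gt (fun hc =>
                (Finset.mem_sdiff.1 hi).2 (Finset.mem_range.2 hc))
              simp [hh, this]
            rw [he]
            exact le_trans (Summable.sum_le_tsum _ (fun i _ => hhnonneg i) hhsumm) htsum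
          have := prod_one_sub_ge' (s \ Finset.range N) (fun i => a * q ^ i)
            (fun i _ => mul_nonneg hA.le (hqip i))
            (fun i _ => by
              show a * q ^ i ≤ 1
              have h' := mul_le_mul_of_nonneg_left (hqi i) hA.le
              rw [mul_one] at h'
              exact h'.trans ha.le)
          simp only [hf]
          linarith
        have hXpos : 0 ≤ ∏ i ∈ Finset.range N, f i := Finset.prod_nonneg fun i _ => (hfpos i).le
        have := mul_le_mul hX hY (by norm_num) (le_trans hXpos hX)
        linarith
      have hT := tendsto_atTop_ciInf hanti hbdd
      refine ⟨_, ?_, hT⟩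
      have hcpos : 0 < (∏ i ∈ Finset.range N, f i) * (1/2) := by
        have : 0 < ∏ i ∈ Finset.range N, f i := Finset.prod_pos fun i _ => hfpos i
        positivity
      exact lt_of_lt_of_le hcpos (le_ciInf claim)
  obtain ⟨L, hL, hHP⟩ := key
  have hEq : qPochInf a q = L := hHP.tprod_eq
  exact ⟨hEq ▸ hL, hEq ▸ hHP.tendsto_prod_nat⟩


open Filter Finset in
/-- the infinite q-beta-binomial weights sum (absolutely) to one. -/
theorem phiBBInf_sum_to_one (q μ ν : ℝ) (hq0 : 0 ≤ q) (hq1 : q < 1)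
    (hμ0 : 0 ≤ μ) (hμ1 : μ < 1) (hνμ : ν ≤ μ) :
    Summable (fun j : ℕ => |phiBBInf q μ ν j|) ∧
      ∑' j : ℕ, phiBBInf q μ ν j = 1 := by
  classical
  have hqi : ∀ i : ℕ, q ^ i ≤ 1 := fun i => pow_le_one₀ hq0 hq1.le
  have hqip : ∀ i : ℕ, 0 ≤ q ^ i := fun i => pow_nonneg hq0 i
  set P : ℕ → ℝ := fun j => ∏ i ∈ Finset.range j, (μ - ν * q ^ i) with hPdef
  set D : ℕ → ℝ := fun j => ∏ i ∈ Finset.range j, (1 - q * q ^ i) with hDdef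
  have hDpos : ∀ j, 0 < D j := fun j => Finset.prod_pos fun i _ => by
    have : q * q ^ i ≤ q * 1 := mul_le_mul_of_nonneg_left (hqi i) hq0
    nlinarith
  have hDfactor : ∀ j, D (j + 1) = D j * (1 - q * q ^ j) := fun j => Finset.prod_range_succ _ j
  have hPfactor : ∀ j, P (j + 1) = P j * (μ - ν * q ^ j) := fun j => Finset.prod_range_succ _ j
  obtain ⟨hQpos, hQtend⟩ := qPochInf_spec' q q hq0 hq1 hq1
  obtain ⟨hApos, hAtend⟩ := qPochInf_spec' μ q hq0 hq1 hμ1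
  obtain ⟨hBpos, hBtend⟩ := qPochInf_spec' ν q hq0 hq1 (lt_of_le_of_lt hνμ hμ1)
  have hDanti : ∀ j, qPochInf q q ≤ D j := by
    have hanti : Antitone D := antitone_nat_of_succ_le fun j => by
      rw [hDfactor j]
      have h1 : q * q ^ j ≤ q * 1 := mul_le_mul_of_nonneg_left (hqi j) hq0
      nlinarith [hDpos j, mul_nonneg hq0 (hqip j)]
    exact fun j => hanti.le_of_tendsto hQtend j
  -- geometric bound on P
  set r : ℝ := (1 + μ) / 2 with hrdef
  have hr0 : 0 < r := by rw [hrdef]; linarith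
  have hr1 : r < 1 := by rw [hrdef]; linarith
  obtain ⟨N, hN⟩ : ∃ N : ℕ, |ν| * q ^ N ≤ (1 - μ) / 2 := by
    have h0 : Tendsto (fun n : ℕ => |ν| * q ^ n) atTop (nhds (|ν| * 0)) :=
      (tendsto_pow_atTop_nhds_zero_of_lt_one hq0 hq1).const_mul _
    rw [mul_zero] at h0
    exact (h0.eventually_le_const (by linarith : (0:ℝ) < (1 - μ) / 2)).exists
  have hPb : ∀ k, |P (N + k)| ≤ |P N| * r ^ k := by
    intro k
    have hsplit : P (N + k) = P N * ∏ i ∈ Finset.range k, (μ - ν * q ^ (N + i)) := by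
      simp only [hPdef]
      rw [Finset.prod_range_add]
    rw [hsplit, abs_mul]
    refine mul_le_mul_of_nonneg_left ?_ (abs_nonneg _)
    calc |∏ i ∈ Finset.range k, (μ - ν * q ^ (N + i))|
        = ∏ i ∈ Finset.range k, |μ - ν * q ^ (N + i)| := Finset.abs_prod _ _
      _ ≤ ∏ _i ∈ Finset.range k, r := by
          refine Finset.prod_le_prod (fun i _ => abs_nonneg _) (fun i _ => ?_)
          have h1 : |μ - ν * q ^ (N + i)| ≤ |μ| + |ν * q ^ (N + i)| := abs_sub _ _
          rw [abs_mul, abs_of_nonneg hμ0, abs_of_nonneg (hqip _)] at h1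
          have h2 : q ^ (N + i) ≤ q ^ N := pow_le_pow_of_le_one hq0 hq1.le (Nat.le_add_right N i)
          have h3 : |ν| * q ^ (N + i) ≤ |ν| * q ^ N :=
            mul_le_mul_of_nonneg_left h2 (abs_nonneg ν)
          rw [hrdef]; linarith
      _ = r ^ k := by rw [Finset.prod_const, Finset.card_range]
  have hSum : Summable fun j => |P j| / D j := by
    have hshift : Summable fun k : ℕ => |P (k + N)| / D (k + N) := by
      refine Summable.of_nonneg_of_le (fun k => div_nonneg (abs_nonneg _) (hDpos _).le) (fun k => ?_)
        ((summable_geometric_of_lt_one hr0.le hr1).mul_left (|P N| / qPochInf q q))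
      have h1 : |P (k + N)| ≤ |P N| * r ^ k := by rw [Nat.add_comm]; exact hPb k
      calc |P (k + N)| / D (k + N) ≤ |P N| * r ^ k / qPochInf q q :=
            div_le_div₀ (by positivity) h1 hQpos (hDanti _)
        _ = |P N| / qPochInf q q * r ^ k := by ring
    exact (summable_nat_add_iff N).mp hshift
  -- the family of sums
  set t : ℕ → ℕ → ℝ := fun n j => (q ^ n) ^ j * P j / D j with htdef
  have htabs : ∀ n j, |t n j| ≤ |P j| / D j := by
    intro n j
    have h1 : |(q ^ n) ^ j| ≤ 1 := by
      rw [abs_pow, abs_pow, abs_of_nonneg hq0]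
      exact pow_le_one₀ (pow_nonneg hq0 n) (pow_le_one₀ hq0 hq1.le)
    simp only [htdef]
    rw [abs_div, abs_mul, abs_of_pos (hDpos j)]
    have h2 : |(q ^ n) ^ j| * |P j| ≤ |P j| := by
      have := mul_le_mul_of_nonneg_right h1 (abs_nonneg (P j))
      rwa [one_mul] at this
    exact div_le_div₀ (abs_nonneg _) h2 (hDpos j) (le_refl _)
  have htsumm : ∀ n, Summable (t n) := fun n =>
    Summable.of_norm_bounded hSum fun j => by rw [Real.norm_eq_abs]; exact htabs n j
  set g : ℕ → ℝ := fun n => ∑' j, t n j with hgdef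
  -- functional equation
  have feq : ∀ n, (1 - μ * q ^ n) * g n = (1 - ν * q ^ n) * g (n + 1) := by
    intro n
    set u : ℕ → ℝ := fun j => t n j - t (n + 1) j with hudef
    have husumm : Summable u := (htsumm n).sub (htsumm (n + 1))
    have hS : ∑' j, u j = g n - g (n + 1) := Summable.tsum_sub (htsumm n) (htsumm (n + 1))
    have hu0 : u 0 = 0 := by simp [hudef, htdef]
    have hushift : ∀ j, u (j + 1) = q ^ n * (μ * u j + (μ - ν) * t (n + 1) j) := by
      intro j
      have hDne : D j ≠ 0 := (hDpos j).ne'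
      have hfne : (1 - q * q ^ j) ≠ 0 := by
        have h1 : q * q ^ j ≤ q * 1 := mul_le_mul_of_nonneg_left (hqi j) hq0
        nlinarith
      simp only [hudef, htdef, hDfactor j, hPfactor j]
      field_simp
      linear_combination (P j * (μ - ν * q ^ j) * q ^ (j * n) * q ^ n) * inv_mul_cancel₀ hfne
    have hshift : ∑' j, u j = u 0 + ∑' j, u (j + 1) := Summable.tsum_eq_zero_add husumm
    have hrhs : ∑' j, u (j + 1) = q ^ n * (μ * (∑' j, u j) + (μ - ν) * g (n + 1)) := by
      calc ∑' j, u (j + 1) = ∑' j, q ^ n * (μ * u j + (μ - ν) * t (n + 1) j) :=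
            tsum_congr hushift
        _ = q ^ n * ∑' j, (μ * u j + (μ - ν) * t (n + 1) j) := tsum_mul_left
        _ = q ^ n * (μ * (∑' j, u j) + (μ - ν) * g (n + 1)) := by
            rw [Summable.tsum_add (husumm.mul_left μ) ((htsumm (n + 1)).mul_left (μ - ν)),
              tsum_mul_left, tsum_mul_left]
    have hS0 : g n - g (n + 1)
        = q ^ n * (μ * (g n - g (n + 1)) + (μ - ν) * g (n + 1)) := by
      have h := hshift
      rw [hu0, zero_add, hrhs, hS] at h
      exact h
    linear_combination hS0
  -- induction
  have key : ∀ n, (∏ i ∈ Finset.range n, (1 - ν * q ^ i)) * g n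
      = (∏ i ∈ Finset.range n, (1 - μ * q ^ i)) * g 0 := by
    intro n
    induction n with
    | zero => simp
    | succ n ih =>
      rw [Finset.prod_range_succ, Finset.prod_range_succ]
      calc (∏ i ∈ Finset.range n, (1 - ν * q ^ i)) * (1 - ν * q ^ n) * g (n + 1)
          = (∏ i ∈ Finset.range n, (1 - ν * q ^ i)) * ((1 - ν * q ^ n) * g (n + 1)) := by ring
        _ = (∏ i ∈ Finset.range n, (1 - ν * q ^ i)) * ((1 - μ * q ^ n) * g n) := by
            rw [← feq n]
        _ = (1 - μ * q ^ n) * ((∏ i ∈ Finset.range n, (1 - ν * q ^ i)) * g n) := by ring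
        _ = (1 - μ * q ^ n) * ((∏ i ∈ Finset.range n, (1 - μ * q ^ i)) * g 0) := by rw [ih]
        _ = (∏ i ∈ Finset.range n, (1 - μ * q ^ i)) * (1 - μ * q ^ n) * g 0 := by ring
  -- g n → 1
  have hg1 : Tendsto g atTop (nhds 1) := by
    have hlim : Tendsto (fun n => ∑' j, t n j) atTop
        (nhds (∑' j : ℕ, if j = 0 then (1:ℝ) else 0)) := by
      refine tendsto_tsum_of_dominated_convergence hSum (fun j => ?_)
        (Filter.Eventually.of_forall fun n j => by rw [Real.norm_eq_abs]; exact htabs n j)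
      rcases Nat.eq_zero_or_pos j with h0 | hpos
      · subst h0
        have hconst : ∀ n, t n 0 = 1 := fun n => by simp [htdef, hPdef, hDdef]
        simp only [if_pos rfl]
        exact Tendsto.congr (fun n => (hconst n).symm) tendsto_const_nhds
      · have hne : j ≠ 0 := Nat.pos_iff_ne_zero.mp hpos
        simp only [if_neg hne]
        have hqj1 : q ^ j < 1 := pow_lt_one₀ hq0 hq1 hne
        have h1 : Tendsto (fun n : ℕ => (q ^ j) ^ n * (P j / D j)) atTop (nhds (0 * (P j / D j))) :=
          (tendsto_pow_atTop_nhds_zero_of_lt_one (hqip j) hqj1).mul_const _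
        rw [zero_mul] at h1
        refine Tendsto.congr (fun n => ?_) h1
        simp only [htdef]
        rw [← pow_mul, ← pow_mul, Nat.mul_comm]
        ring
    have : (∑' j : ℕ, if j = 0 then (1:ℝ) else 0) = 1 := tsum_ite_eq 0 1
    rw [this] at hlim
    exact hlim
  -- take limits
  have hfinal : qPochInf ν q = qPochInf μ q * g 0 := by
    have h1 : Tendsto (fun n => (∏ i ∈ Finset.range n, (1 - ν * q ^ i)) * g n) atTop
        (nhds (qPochInf ν q * 1)) := hBtend.mul hg1
    rw [mul_one] at h1
    have h2 : Tendsto (fun n => (∏ i ∈ Finset.range n, (1 - μ * q ^ i)) * g 0) atTop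
        (nhds (qPochInf μ q * g 0)) := hAtend.mul_const _
    have h3 : (fun n => (∏ i ∈ Finset.range n, (1 - ν * q ^ i)) * g n)
        = fun n => (∏ i ∈ Finset.range n, (1 - μ * q ^ i)) * g 0 := funext key
    rw [h3] at h1
    exact tendsto_nhds_unique h1 h2
  have hg0 : g 0 = qPochInf ν q / qPochInf μ q := by
    field_simp [hfinal]
    rw [hfinal]; ring
  -- rewrite phi
  have hphi : ∀ j, phiBBInf q μ ν j = qPochInf μ q / qPochInf ν q * (P j / D j) := by
    intro j
    have hj : qPoch q q (j : ℤ) = D j := by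
      simp only [qPoch, if_pos (Int.ofNat_nonneg j), Int.toNat_natCast, hDdef]
    rw [phiBBInf, hj]
    have h1 : (∏ i ∈ Finset.range j, (μ - ν * q ^ i)) = P j := rfl
    rw [h1]
    field_simp
  have hgzero : ∑' j, P j / D j = g 0 := by
    refine tsum_congr fun j => ?_
    simp only [hgdef, htdef, pow_zero, one_pow, one_mul]
  constructor
  · have h1 : Summable fun j => qPochInf μ q / qPochInf ν q * (|P j| / D j) := hSum.mul_left _
    refine h1.congr fun j => ?_
    rw [hphi j, abs_mul, abs_of_pos (div_pos hApos hBpos), abs_div, abs_of_pos (hDpos j)]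
  · calc ∑' j, phiBBInf q μ ν j
        = ∑' j, qPochInf μ q / qPochInf ν q * (P j / D j) := tsum_congr hphi
      _ = qPochInf μ q / qPochInf ν q * ∑' j, P j / D j := tsum_mul_left
      _ = qPochInf μ q / qPochInf ν q * (qPochInf ν q / qPochInf μ q) := by
          rw [hgzero, hg0]
      _ = 1 := by field_simp



end
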